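/- Let {a_n} and {b_n} satisfy b_n = ∑_{k=1}^n [n choose k]_q (-1)^k q^{binom(k,2)} a_k. Then for any positive integer r, ∑_{k=1}^n [n choose k]_q (-1)^k q^{binom(k,2)-nk} ∑_{1≤k_1≤⋯≤k_r=k} (∏_{i=1}^r q^{k_i}/[k_i]_q)·b_{k_1} = ∑_{k=1}^n q^{(r-1)k} a_k / [k]_q^r. -/

import Mathlib

open scoped Classical

/-- The Gaussian `q`-binomial coefficient `[n choose k]_q = ∏_{i=1}^k (1-q^{n-k+i})/(1-q^i)`. -/
noncomputable def qbinom (q : ℂ) (n k : ℕ) : ℂ :=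
  ∏ i ∈ Finset.range k, (1 - q ^ (n - k + 1 + i)) / (1 - q ^ (1 + i))

/-- The `q`-integer `[k]_q = (1-q^k)/(1-q)`. -/
noncomputable def qint (q : ℂ) (k : ℕ) : ℂ := (1 - q ^ k) / (1 - q)


section Helpers
open Finset
noncomputable def qfact (q : ℂ) (n : ℕ) : ℂ := ∏ i ∈ range n, (1 - q ^ (1 + i))

noncomputable def qb (q : ℂ) (n k : ℕ) : ℂ :=
  if k ≤ n then qfact q n / (qfact q k * qfact q (n - k)) else 0

lemma qfact_succ (q : ℂ) (n : ℕ) : qfact q (n + 1) = qfact q n * (1 - q ^ (n + 1)) := by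
  rw [qfact, qfact, prod_range_succ, add_comm 1 n]

lemma qfact_ne_zero {q : ℂ} {N : ℕ} (hq : ∀ i, 1 ≤ i → i ≤ N → q ^ i ≠ 1)
    {m : ℕ} (hm : m ≤ N) : qfact q m ≠ 0 := by
  induction m with
  | zero => simp [qfact]
  | succ n ih =>
    rw [qfact_succ]
    refine mul_ne_zero (ih (by omega)) (sub_ne_zero.2 ?_)
    exact fun h => hq (n+1) (by omega) hm h.symm

lemma qfact_split (q : ℂ) {k n : ℕ} (hk : k ≤ n) :
    qfact q n = qfact q (n - k) * ∏ i ∈ range k, (1 - q ^ (n - k + 1 + i)) := by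
  have h : n = (n - k) + k := by omega
  rw [qfact]
  conv_lhs => rw [h]
  rw [prod_range_add]
  congr 1
  apply prod_congr rfl
  intro i _
  congr 2
  omega

lemma qbinom_eq_qb {q : ℂ} {N : ℕ} (hq : ∀ i, 1 ≤ i → i ≤ N → q ^ i ≠ 1)
    {n k : ℕ} (hk : k ≤ n) (hn : n ≤ N) : qbinom q n k = qb q n k := by
  rw [qbinom, qb, if_pos hk, prod_div_distrib]
  have h1 : ∏ i ∈ range k, (1 - q ^ (n - k + 1 + i)) = qfact q n / qfact q (n - k) := by
    rw [eq_div_iff (qfact_ne_zero hq (le_trans (Nat.sub_le n k) hn)), mul_comm]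
    exact (qfact_split q hk).symm
  have h2 : ∏ i ∈ range k, (1 - q ^ (1 + i)) = qfact q k := rfl
  rw [h1, h2, div_div]
  rw [mul_comm (qfact q (n-k))]

lemma qfact_zero (q : ℂ) : qfact q 0 = 1 := by simp [qfact]

lemma qb_self {q : ℂ} {n : ℕ} (h : qfact q n ≠ 0) : qb q n n = 1 := by
  simp [qb, qfact_zero, div_self h]

lemma qb_zero {q : ℂ} {n : ℕ} (h : qfact q n ≠ 0) : qb q n 0 = 1 := by
  simp [qb, qfact_zero, div_self h]

lemma qfact_pred {q : ℂ} {m : ℕ} (hm : 1 ≤ m) :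
    qfact q m = qfact q (m-1) * (1 - q ^ m) := by
  obtain ⟨u, rfl⟩ : ∃ u, m = u + 1 := ⟨m-1, by omega⟩
  simpa using qfact_succ q u

lemma qb_of_lt {q : ℂ} {n k : ℕ} (h : n < k) : qb q n k = 0 := by
  rw [qb, if_neg (by omega)]

lemma choose_two_succ (n : ℕ) : (n+1).choose 2 = n.choose 2 + n := by
  rw [show (n+1).choose 2 = n.choose 1 + n.choose 2 from rfl, Nat.choose_one_right]; omega

lemma choose_two_add (a b : ℕ) : (a+b).choose 2 = a.choose 2 + b.choose 2 + a*b := by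
  induction b with
  | zero => simp
  | succ b ih =>
    have h1 := choose_two_succ (a+b)
    have h2 := choose_two_succ b
    have h3 : a*(b+1) = a*b + a := by ring
    rw [show a + (b+1) = (a+b)+1 by ring]
    omega

lemma two_mul_choose_two (n : ℕ) : 2 * n.choose 2 + n = n * n := by
  induction n with
  | zero => simp
  | succ n ih =>
    have h1 := choose_two_succ n
    have h2 : (n+1)*(n+1) = n*n + 2*n + 1 := by ring
    omega


section
variable {q : ℂ} {N : ℕ} (hq : ∀ i, 1 ≤ i → i ≤ N → q ^ i ≠ 1)
include hq

lemma qb_pascal1 {t m : ℕ} (ht : 1 ≤ t) (htm : t ≤ m) (hm : m ≤ N) :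
    qb q m t = qb q (m-1) t + q ^ (m-t) * qb q (m-1) (t-1) := by
  rcases eq_or_lt_of_le htm with h | h
  · subst h
    rw [qb_self (qfact_ne_zero hq hm), qb_of_lt (by omega),
      show t - t = 0 by omega, pow_zero, qb_self (qfact_ne_zero hq (le_trans (by omega) hm))]
    ring
  · -- t < m
    have h1 : t ≤ m - 1 := by omega
    have h2 : t - 1 ≤ m - 1 := by omega
    rw [qb, if_pos htm, qb, if_pos h1, qb, if_pos h2]
    have e1 : qfact q m = qfact q (m-1) * (1 - q ^ m) := qfact_pred (by omega)
    have e2 : qfact q t = qfact q (t-1) * (1 - q ^ t) := qfact_pred ht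
    have e3 : qfact q (m - t) = qfact q (m-1-t) * (1 - q ^ (m - t)) := by
      rw [qfact_pred (m := m - t) (by omega), show m - t - 1 = m - 1 - t by omega]
    have e4 : m - 1 - (t-1) = m - t := by omega
    rw [e1, e2, e4, e3]
    have n1 : qfact q (m-1) ≠ 0 := qfact_ne_zero hq (by omega)
    have n2 : qfact q (t-1) ≠ 0 := qfact_ne_zero hq (by omega)
    have n3 : qfact q (m-1-t) ≠ 0 := qfact_ne_zero hq (by omega)
    have n4 : (1 - q ^ t) ≠ 0 := sub_ne_zero.2 fun hh => hq t ht (by omega) hh.symm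
    have n5 : (1 - q ^ (m-t)) ≠ 0 := sub_ne_zero.2 fun hh => hq (m-t) (by omega) (by omega) hh.symm
    have key : (1 - q ^ m) = (1 - q ^ (m-t)) + q ^ (m-t) * (1 - q ^ t) := by
      have : q ^ (m-t) * q ^ t = q ^ m := by rw [← pow_add]; congr 1; omega
      rw [mul_sub, this]; ring
    rw [key]
    field_simp

lemma qb_pascal2 {t m : ℕ} (ht : 1 ≤ t) (htm : t ≤ m) (hm : m ≤ N) :
    qb q m t = q ^ t * qb q (m-1) t + qb q (m-1) (t-1) := by
  rcases eq_or_lt_of_le htm with h | h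
  · subst h
    rw [qb_self (qfact_ne_zero hq hm), qb_of_lt (by omega),
      qb_self (qfact_ne_zero hq (le_trans (by omega) hm))]
    ring
  · have h1 : t ≤ m - 1 := by omega
    have h2 : t - 1 ≤ m - 1 := by omega
    rw [qb, if_pos htm, qb, if_pos h1, qb, if_pos h2]
    have e1 : qfact q m = qfact q (m-1) * (1 - q ^ m) := qfact_pred (by omega)
    have e2 : qfact q t = qfact q (t-1) * (1 - q ^ t) := qfact_pred ht
    have e3 : qfact q (m - t) = qfact q (m-1-t) * (1 - q ^ (m - t)) := by
      rw [qfact_pred (m := m - t) (by omega), show m - t - 1 = m - 1 - t by omega]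
    have e4 : m - 1 - (t-1) = m - t := by omega
    rw [e1, e2, e4, e3]
    have n1 : qfact q (m-1) ≠ 0 := qfact_ne_zero hq (by omega)
    have n2 : qfact q (t-1) ≠ 0 := qfact_ne_zero hq (by omega)
    have n3 : qfact q (m-1-t) ≠ 0 := qfact_ne_zero hq (by omega)
    have n4 : (1 - q ^ t) ≠ 0 := sub_ne_zero.2 fun hh => hq t ht (by omega) hh.symm
    have n5 : (1 - q ^ (m-t)) ≠ 0 := sub_ne_zero.2 fun hh => hq (m-t) (by omega) (by omega) hh.symm
    have key : (1 - q ^ m) = q ^ t * (1 - q ^ (m-t)) + (1 - q ^ t) := by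
      have : q ^ t * q ^ (m-t) = q ^ m := by rw [← pow_add]; congr 1; omega
      rw [mul_sub, this]; ring
    rw [key]
    field_simp

lemma qb_mul {j k m : ℕ} (hj : j ≤ k) (hk : k ≤ m) (hm : m ≤ N) :
    qb q m k * qb q k j = qb q m j * qb q (m-j) (k-j) := by
  have h1 : j ≤ m := le_trans hj hk
  have h2 : k - j ≤ m - j := by omega
  rw [qb, if_pos hk, qb, if_pos hj, qb, if_pos h1, qb, if_pos h2]
  have e : m - j - (k - j) = m - k := by omega
  rw [e]
  have n1 : qfact q k ≠ 0 := qfact_ne_zero hq (by omega)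
  have n2 : qfact q (m-k) ≠ 0 := qfact_ne_zero hq (by omega)
  have n3 : qfact q j ≠ 0 := qfact_ne_zero hq (by omega)
  have n4 : qfact q (k-j) ≠ 0 := qfact_ne_zero hq (by omega)
  have n5 : qfact q (m-j) ≠ 0 := qfact_ne_zero hq (by omega)
  field_simp

lemma qb_binom {m : ℕ} (hm : m ≤ N) (x : ℂ) :
    ∑ t ∈ range (m+1), (-1:ℂ)^t * qb q m t * q^(Nat.choose t 2) * x^t
      = ∏ i ∈ range m, (1 - q^i * x) := by
  induction m with
  | zero =>
    have : qfact q 0 ≠ 0 := by rw [qfact_zero]; norm_num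
    simp [qb_self this]
  | succ m ih =>
    have hm' : m ≤ N := by omega
    have hfact : qfact q (m+1) ≠ 0 := qfact_ne_zero hq hm
    have hfact' : qfact q m ≠ 0 := qfact_ne_zero hq hm'
    rw [prod_range_succ, ← ih hm', Finset.sum_range_succ']
    have e0 : (-1:ℂ)^0 * qb q (m+1) 0 * q^(Nat.choose 0 2) * x^0 = 1 := by
      simp [qb_zero hfact]
    rw [e0]
    have split : ∀ i ∈ range (m+1),
        (-1:ℂ)^(i+1) * qb q (m+1) (i+1) * q^(Nat.choose (i+1) 2) * x^(i+1)
        = ((-1:ℂ)^(i+1) * qb q m (i+1) * q^(Nat.choose (i+1) 2) * x^(i+1))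
          - (q^m * x) * ((-1:ℂ)^i * qb q m i * q^(Nat.choose i 2) * x^i) := by
      intro i hi
      simp only [mem_range] at hi
      have hp := qb_pascal1 hq (t := i+1) (m := m+1) (by omega) (by omega) hm
      simp only [Nat.add_sub_cancel] at hp
      rw [show m+1-(i+1) = m - i by omega] at hp
      rw [hp]
      have hc : Nat.choose (i+1) 2 = i + Nat.choose i 2 := by
        rw [Nat.choose_succ_succ, Nat.choose_one_right]
      have hpow : q^(m-i) * q^(i + Nat.choose i 2) = q^m * q^(Nat.choose i 2) := by
        rw [← pow_add, ← pow_add]; congr 1; omega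
      rw [hc]
      rw [pow_succ (-1:ℂ) i, pow_succ x i]
      calc (-1:ℂ)^i * -1 * (qb q m (i+1) + q^(m-i) * qb q m i) * q^(i + Nat.choose i 2) * (x^i * x)
          = (-1:ℂ)^i * -1 * qb q m (i+1) * q^(i + Nat.choose i 2) * (x^i * x)
            + (-1:ℂ)^i * -1 * qb q m i * (q^(m-i) * q^(i + Nat.choose i 2)) * (x^i * x) := by ring
        _ = _ := by rw [hpow]; ring
    rw [Finset.sum_congr rfl split, Finset.sum_sub_distrib, ← Finset.mul_sum]
    have key : (∑ i ∈ range (m+1), (-1:ℂ)^(i+1) * qb q m (i+1) * q^(Nat.choose (i+1) 2) * x^(i+1)) + 1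
        = ∑ t ∈ range (m+1), (-1:ℂ)^t * qb q m t * q^(Nat.choose t 2) * x^t := by
      have h1 : ∑ t ∈ range (m+2), (-1:ℂ)^t * qb q m t * q^(Nat.choose t 2) * x^t
          = (∑ i ∈ range (m+1), (-1:ℂ)^(i+1) * qb q m (i+1) * q^(Nat.choose (i+1) 2) * x^(i+1))
            + (-1:ℂ)^0 * qb q m 0 * q^(Nat.choose 0 2) * x^0 :=
        Finset.sum_range_succ' _ (m+1)
      have h2 : ∑ t ∈ range (m+2), (-1:ℂ)^t * qb q m t * q^(Nat.choose t 2) * x^t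
          = (∑ t ∈ range (m+1), (-1:ℂ)^t * qb q m t * q^(Nat.choose t 2) * x^t)
            + (-1:ℂ)^(m+1) * qb q m (m+1) * q^(Nat.choose (m+1) 2) * x^(m+1) :=
        Finset.sum_range_succ _ (m+1)
      rw [qb_of_lt (by omega)] at h2
      simp [qb_zero hfact'] at h1 h2
      rw [← h1, h2]
    linear_combination key

lemma qb_vanish (hq0 : q ≠ 0) {m : ℕ} (hm1 : 1 ≤ m) (hm : m ≤ N) :
    ∑ t ∈ range (m+1), (-1:ℂ)^t * qb q m t * q^((Nat.choose t 2 : ℤ) - t*((m:ℤ)-1)) = 0 := by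
  have hx := qb_binom hq hm (q ^ (-((m:ℤ)-1)))
  have hzero : ∏ i ∈ range m, (1 - q^i * q ^ (-((m:ℤ)-1))) = 0 := by
    refine Finset.prod_eq_zero (i := m-1) (by simp [Finset.mem_range]; omega) ?_
    rw [sub_eq_zero, ← zpow_natCast q (m-1), ← zpow_add₀ hq0]
    rw [show ((m-1 : ℕ) : ℤ) + (-((m:ℤ)-1)) = 0 by push_cast; omega]
    simp
  rw [hzero] at hx
  have key : ∀ t:ℕ, (-1:ℂ)^t * qb q m t * q^(Nat.choose t 2) * (q ^ (-((m:ℤ)-1)))^t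
      = (-1:ℂ)^t * qb q m t * q^((Nat.choose t 2 : ℤ) - t*((m:ℤ)-1)) := by
    intro t
    rw [← zpow_natCast q (Nat.choose t 2), ← zpow_natCast (q ^ (-((m:ℤ)-1))) t, ← zpow_mul,
      mul_assoc, ← zpow_add₀ hq0]
    congr 2
    push_cast; ring
  rw [← hx]
  exact Finset.sum_congr rfl fun t _ => (key t).symm

lemma qint_ne_zero (hq0 : q ≠ 0) {k : ℕ} (hk1 : 1 ≤ k) (hk : k ≤ N) : qint q k ≠ 0 := by
  have h1 : (1 : ℂ) - q ^ k ≠ 0 := sub_ne_zero.2 fun h => hq k hk1 hk h.symm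
  have h2 : (1 : ℂ) - q ≠ 0 := sub_ne_zero.2 fun h => hq 1 le_rfl (by omega) (by simpa using h.symm)
  exact div_ne_zero h1 h2

lemma qb_inversion (hq0 : q ≠ 0) {a b : ℕ → ℂ}
    (hb : ∀ m, m ≤ N → b m = ∑ k ∈ Icc 1 m, qb q m k * (-1)^k * q^(Nat.choose k 2) * a k)
    {n : ℕ} (hn1 : 1 ≤ n) (hn : n ≤ N) :
    ∑ k ∈ Icc 1 n, qb q n k * (-1)^k * q^((Nat.choose k 2 + k : ℤ) - n*k) * b k = a n := by
  have step1 : ∑ k ∈ Icc 1 n, qb q n k * (-1:ℂ)^k * q^((Nat.choose k 2 + k : ℤ) - n*k) * b k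
      = ∑ k ∈ Icc 1 n, ∑ j ∈ Icc 1 k,
          qb q n k * qb q k j * (-1:ℂ)^k * (-1:ℂ)^j *
            q^((Nat.choose k 2 + k : ℤ) - n*k + Nat.choose j 2) * a j := by
    apply Finset.sum_congr rfl
    intro k hk
    simp only [Finset.mem_Icc] at hk
    rw [hb k (by omega), Finset.mul_sum]
    apply Finset.sum_congr rfl
    intro j hj
    rw [zpow_add₀ hq0, zpow_natCast]
    ring
  rw [step1]
  rw [Finset.sum_comm' (s := Icc 1 n) (t := fun k => Icc 1 k) (t' := Icc 1 n)
    (s' := fun j => Icc j n) (fun k j => by simp only [Finset.mem_Icc]; omega)]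
  have inner : ∀ j ∈ Icc 1 n, (∑ k ∈ Icc j n,
      qb q n k * qb q k j * (-1:ℂ)^k * (-1:ℂ)^j *
        q^((Nat.choose k 2 + k : ℤ) - n*k + Nat.choose j 2) * a j)
      = if j = n then a j else 0 := by
    intro j hj
    simp only [Finset.mem_Icc] at hj
    by_cases hjn : j = n
    · subst hjn
      rw [if_pos rfl, Finset.Icc_self, Finset.sum_singleton]
      rw [qb_self (qfact_ne_zero hq hn)]
      have he : ((Nat.choose j 2 + j : ℤ)) - j*j + Nat.choose j 2 = 0 := by
        have := two_mul_choose_two j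
        push_cast
        push_cast at this
        omega
      rw [he, zpow_zero]
      have hsq : (-1:ℂ)^j * (-1:ℂ)^j = 1 := by rw [← pow_add, ← two_mul, pow_mul]; norm_num
      linear_combination (a j) * hsq
    · rw [if_neg hjn]
      have hjn' : j < n := by omega
      rw [show Icc j n = Ico j (n+1) from (Finset.Ico_add_one_right_eq_Icc j n).symm, Finset.sum_Ico_eq_sum_range]
      have hcongr : ∀ t ∈ range (n + 1 - j),
          qb q n (j+t) * qb q (j+t) j * (-1:ℂ)^(j+t) * (-1:ℂ)^j *
            q^((((j+t).choose 2 : ℕ) : ℤ) + (((j+t : ℕ)) : ℤ) - (n:ℤ) * (((j+t : ℕ)) : ℤ) + ((j.choose 2 : ℕ) : ℤ)) * a j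
          = (qb q n j * q^((2*Nat.choose j 2 + j : ℤ) - n*j) * a j) *
            ((-1:ℂ)^t * qb q (n-j) t * q^((Nat.choose t 2 : ℤ) - t*(((n-j:ℕ):ℤ)-1))) := by
        intro t ht
        simp only [Finset.mem_range] at ht
        rw [qb_mul hq (Nat.le_add_right j t) (by omega) hn, Nat.add_sub_cancel_left]
        rw [show (-1:ℂ)^(j+t) = (-1:ℂ)^j * (-1:ℂ)^t from pow_add _ _ _]
        rw [show (((j+t).choose 2 : ℕ) : ℤ) + (((j+t : ℕ)) : ℤ) - (n:ℤ) * (((j+t : ℕ)) : ℤ) + ((j.choose 2 : ℕ) : ℤ)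
            = ((2*Nat.choose j 2 + j : ℤ) - n*j) + ((Nat.choose t 2 : ℤ) - t*(((n-j:ℕ):ℤ)-1)) by
          have h := choose_two_add j t
          push_cast [h, Nat.cast_sub (le_of_lt hjn')]
          ring]
        rw [zpow_add₀ hq0]
        have hsq : (-1:ℂ)^j * (-1:ℂ)^j = 1 := by rw [← pow_add, ← two_mul, pow_mul]; norm_num
        calc qb q n j * qb q (n-j) t * ((-1:ℂ)^j * (-1:ℂ)^t) * (-1:ℂ)^j *
              (q^((2*Nat.choose j 2 + j : ℤ) - n*j) * q^((Nat.choose t 2 : ℤ) - t*(((n-j:ℕ):ℤ)-1))) * a j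
            = ((-1:ℂ)^j * (-1:ℂ)^j) * (qb q n j * qb q (n-j) t * (-1:ℂ)^t *
              (q^((2*Nat.choose j 2 + j : ℤ) - n*j) * q^((Nat.choose t 2 : ℤ) - t*(((n-j:ℕ):ℤ)-1))) * a j) := by ring
          _ = _ := by rw [hsq]; ring
      rw [Finset.sum_congr rfl hcongr, ← Finset.mul_sum]
      rw [show n + 1 - j = (n-j) + 1 by omega]
      rw [qb_vanish hq hq0 (by omega) (by omega)]
      ring
  rw [Finset.sum_congr rfl inner]
  simp [Finset.sum_ite_eq' (Icc 1 n) n, Finset.mem_Icc, hn1]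

lemma qint_ratio {k m : ℕ} (hk : 1 ≤ k) (hkm : k ≤ m) (hm : m ≤ N) :
    qb q (m-1) (k-1) * qint q m = qb q m k * qint q k := by
  have h1 : k - 1 ≤ m - 1 := by omega
  rw [qb, if_pos h1, qb, if_pos hkm, qint, qint]
  have e1 : qfact q m = qfact q (m-1) * (1 - q ^ m) := qfact_pred (by omega)
  have e2 : qfact q k = qfact q (k-1) * (1 - q ^ k) := qfact_pred hk
  have e4 : m - 1 - (k-1) = m - k := by omega
  rw [e1, e2, e4]
  have n1 : qfact q (m-1) ≠ 0 := qfact_ne_zero hq (by omega)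
  have n2 : qfact q (k-1) ≠ 0 := qfact_ne_zero hq (by omega)
  have n3 : qfact q (m-k) ≠ 0 := qfact_ne_zero hq (by omega)
  have n4 : (1 - q ^ k) ≠ 0 := sub_ne_zero.2 fun hh => hq k hk (by omega) hh.symm
  have n5 : (1 - q) ≠ 0 := sub_ne_zero.2 fun hh => hq 1 le_rfl (by omega) (by simpa using hh.symm)
  field_simp

lemma sum_qb_pow {k m : ℕ} (hk : 1 ≤ k) (hkm : k ≤ m) (hm : m ≤ N) :
    ∑ j ∈ Icc k m, q^j * qb q (j-1) (k-1) = q^k * qb q m k := by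
  induction m, hkm using Nat.le_induction with
  | base =>
    rw [Finset.Icc_self, Finset.sum_singleton, qb_self (qfact_ne_zero hq (by omega)),
      qb_self (qfact_ne_zero hq (by omega))]
  | succ m hkm ih =>
    rw [Finset.sum_Icc_succ_top (by omega), ih (by omega), Nat.add_sub_cancel]
    rw [qb_pascal1 hq hk (by omega) hm, Nat.add_sub_cancel]
    rw [show m + 1 - k = m+1-k by rfl]
    have : q^k * q^(m+1-k) = q^(m+1) := by rw [← pow_add]; congr 1; omega
    rw [mul_add, ← mul_assoc, this]

lemma qb_shift (hq0 : q ≠ 0) {a b : ℕ → ℂ}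
    (hb : ∀ m, m ≤ N → b m = ∑ k ∈ Icc 1 m, qb q m k * (-1)^k * q^(Nat.choose k 2) * a k)
    {m : ℕ} (hm : m ≤ N) :
    ∑ j ∈ Icc 1 m, q^j * b j / qint q j
      = ∑ k ∈ Icc 1 m, qb q m k * (-1)^k * q^(Nat.choose k 2) * (q^k * a k / qint q k) := by
  have step1 : ∑ j ∈ Icc 1 m, q^j * b j / qint q j
      = ∑ j ∈ Icc 1 m, ∑ k ∈ Icc 1 j,
          q^j * (qb q j k * (-1:ℂ)^k * q^(Nat.choose k 2) * a k) / qint q j := by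
    apply Finset.sum_congr rfl
    intro j hj
    simp only [Finset.mem_Icc] at hj
    rw [hb j (by omega), Finset.mul_sum, Finset.sum_div]
  rw [step1]
  rw [Finset.sum_comm' (s := Icc 1 m) (t := fun j => Icc 1 j) (t' := Icc 1 m)
    (s' := fun k => Icc k m) (fun j k => by simp only [Finset.mem_Icc]; omega)]
  apply Finset.sum_congr rfl
  intro k hk
  simp only [Finset.mem_Icc] at hk
  have hqk : qint q k ≠ 0 := qint_ne_zero hq hq0 hk.1 (by omega)
  have hterm : ∀ j ∈ Icc k m,
      q^j * (qb q j k * (-1:ℂ)^k * q^(Nat.choose k 2) * a k) / qint q j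
      = ((-1:ℂ)^k * q^(Nat.choose k 2) * a k / qint q k) * (q^j * qb q (j-1) (k-1)) := by
    intro j hj
    simp only [Finset.mem_Icc] at hj
    have hqj : qint q j ≠ 0 := qint_ne_zero hq hq0 (by omega) (by omega)
    have hr := qint_ratio hq hk.1 hj.1 (le_trans hj.2 hm)
    field_simp
    linear_combination (-a k) * hr
  rw [Finset.sum_congr rfl hterm, ← Finset.mul_sum, sum_qb_pow hq hk.1 hk.2 hm]
  field_simp

lemma base_case (hq0 : q ≠ 0) {a b : ℕ → ℂ}
    (hb : ∀ m, m ≤ N → b m = ∑ k ∈ Icc 1 m, qb q m k * (-1)^k * q^(Nat.choose k 2) * a k)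
    {n : ℕ} (hn1 : 1 ≤ n) (hn : n ≤ N) :
    ∑ k ∈ Icc 1 n, qb q n k * (-1:ℂ)^k * q^((Nat.choose k 2 : ℤ) - n*k) * (q^k * b k / qint q k)
      = ∑ k ∈ Icc 1 n, a k / qint q k := by
  induction n, hn1 using Nat.le_induction with
  | base =>
    have h1 : qint q 1 = 1 := by
      rw [qint, pow_one, div_self (sub_ne_zero.2 fun hh => hq 1 le_rfl hn (by simpa using hh.symm))]
    rw [Finset.Icc_self, Finset.sum_singleton, Finset.sum_singleton,
      qb_self (qfact_ne_zero hq hn), h1]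
    have hb1 := hb 1 hn
    rw [Finset.Icc_self, Finset.sum_singleton, qb_self (qfact_ne_zero hq hn)] at hb1
    norm_num at hb1 ⊢
    field_simp [hb1]
    linear_combination -hb1
  | succ n hn1 ih =>
    have hnN : n ≤ N := by omega
    have hqn1 : qint q (n+1) ≠ 0 := qint_ne_zero hq hq0 (by omega) hn
    push_cast
    have split : ∀ k ∈ Icc 1 (n+1),
        qb q (n+1) k * (-1:ℂ)^k * q^((Nat.choose k 2 : ℤ) - (n+1)*k) * (q^k * b k / qint q k)
        = qb q n k * (-1:ℂ)^k * q^((Nat.choose k 2 : ℤ) - n*k) * (q^k * b k / qint q k)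
          + (qb q (n+1) k * (-1:ℂ)^k * q^((Nat.choose k 2 + k : ℤ) - (n+1)*k) * b k) / qint q (n+1) := by
      intro k hk
      simp only [Finset.mem_Icc] at hk
      conv_lhs => rw [qb_pascal2 hq hk.1 hk.2 hn]
      simp only [Nat.add_sub_cancel]
      have hqk : qint q k ≠ 0 := qint_ne_zero hq hq0 hk.1 (by omega)
      have hr := qint_ratio hq hk.1 hk.2 hn
      rw [Nat.add_sub_cancel] at hr
      have eq1 : q^((Nat.choose k 2 : ℤ) - n*k)
          = q^((Nat.choose k 2 : ℤ) - (n+1)*k) * q^k := by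
        rw [← zpow_natCast q k, ← zpow_add₀ hq0]
        congr 1
        push_cast
        ring
      have eq2 : q^((Nat.choose k 2 + k : ℤ) - (n+1)*k)
          = q^((Nat.choose k 2 : ℤ) - (n+1)*k) * q^k := by
        rw [← zpow_natCast q k, ← zpow_add₀ hq0]
        congr 1
        push_cast
        ring
      have e3 : qb q (n+1) k * ((-1:ℂ)^k * (q^((Nat.choose k 2 : ℤ) - ((n:ℤ)+1)*(k:ℤ)) * q^k) * b k) / qint q (n+1)
          = qb q n (k-1) * ((-1:ℂ)^k * (q^((Nat.choose k 2 : ℤ) - ((n:ℤ)+1)*(k:ℤ)) * q^k) * b k) / qint q k := by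
        rw [div_eq_div_iff hqn1 hqk]
        linear_combination (-((-1:ℂ)^k * (q^((Nat.choose k 2 : ℤ) - ((n:ℤ)+1)*(k:ℤ)) * q^k) * b k)) * hr
      rw [eq1, eq2]
      linear_combination (-1:ℂ) * e3
    rw [Finset.sum_congr rfl split, Finset.sum_add_distrib]
    have first : ∑ k ∈ Icc 1 (n+1),
        qb q n k * (-1:ℂ)^k * q^((Nat.choose k 2 : ℤ) - n*k) * (q^k * b k / qint q k)
        = ∑ k ∈ Icc 1 n, a k / qint q k := by
      rw [Finset.sum_Icc_succ_top (by omega : 1 ≤ n+1), qb_of_lt (Nat.lt_succ_self n)]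
      rw [ih hnN]
      ring
    have second : ∑ k ∈ Icc 1 (n+1),
        (qb q (n+1) k * (-1:ℂ)^k * q^((Nat.choose k 2 + k : ℤ) - (n+1)*k) * b k) / qint q (n+1)
        = a (n+1) / qint q (n+1) := by
      rw [← Finset.sum_div]
      congr 1
      have := qb_inversion hq hq0 hb (show 1 ≤ n+1 by omega) hn
      convert this using 2 with k hk
      simp only [Nat.cast_add, Nat.cast_one]
    rw [first, second, Finset.sum_Icc_succ_top (by omega : 1 ≤ n+1)]

end
open scoped Classical in
noncomputable def Ssum (q : ℂ) (b : ℕ → ℂ) (n s k : ℕ) : ℂ :=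
  ∑ f ∈ (Fintype.piFinset fun _ : Fin (s+1) => Finset.Icc 1 n).filter
      (fun f => Monotone f ∧ f (Fin.last s) = k),
    (∏ i, q ^ f i / qint q (f i)) * b (f 0)

lemma Ssum_zero (q : ℂ) (b : ℕ → ℂ) {n k : ℕ} (hk1 : 1 ≤ k) (hkn : k ≤ n) :
    Ssum q b n 0 k = q ^ k * b k / qint q k := by
  rw [Ssum]
  have hset : ((Fintype.piFinset fun _ : Fin 1 => Finset.Icc 1 n).filter
      (fun f => Monotone f ∧ f (Fin.last 0) = k)) = {fun _ => k} := by
    ext f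
    simp only [Finset.mem_filter, Fintype.mem_piFinset, Finset.mem_singleton, Finset.mem_Icc]
    constructor
    · rintro ⟨hmem, hmono, hlast⟩
      funext i
      rw [Fin.fin_one_eq_zero i]
      exact hlast
    · rintro rfl
      exact ⟨fun i => ⟨hk1, hkn⟩, monotone_const, rfl⟩
  rw [hset, Finset.sum_singleton]
  rw [Fin.prod_univ_one]
  ring

lemma Ssum_succ (q : ℂ) (b : ℕ → ℂ) (n s k : ℕ) :
    Ssum q b n (s+1) k = Ssum q (fun m => ∑ j ∈ Finset.Icc 1 m, q ^ j * b j / qint q j) n s k := by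
  rw [Ssum, Ssum]
  have hmulsum : ∀ g : Fin (s+1) → ℕ, ((∏ i : Fin (s+1), q ^ g i / qint q (g i)) *
        ∑ j ∈ Finset.Icc 1 (g 0), q ^ j * b j / qint q j)
      = ∑ j ∈ Finset.Icc 1 (g 0), (∏ i : Fin (s+1), q ^ g i / qint q (g i)) * (q ^ j * b j / qint q j) :=
    fun g => Finset.mul_sum _ _ _
  rw [Finset.sum_congr rfl (fun g _ => hmulsum g), Finset.sum_sigma']
  refine Finset.sum_nbij' (fun f => ⟨f ∘ Fin.succ, f 0⟩) (fun p => Fin.cons p.2 p.1) ?_ ?_ ?_ ?_ ?_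
  · -- hi : maps into sigma set
    intro f hf
    simp only [Finset.mem_filter, Fintype.mem_piFinset] at hf
    obtain ⟨hmem, hmono, hlast⟩ := hf
    simp only [Finset.mem_sigma, Finset.mem_filter, Fintype.mem_piFinset, Function.comp_apply]
    refine ⟨⟨fun i => hmem _, hmono.comp Fin.strictMono_succ.monotone, ?_⟩, ?_⟩
    · show f (Fin.succ (Fin.last s)) = k
      rw [Fin.succ_last]
      exact hlast
    · simp only [Finset.mem_Icc]
      have h1 : 1 ≤ f 0 := (Finset.mem_Icc.1 (hmem 0)).1
      have h2 : f 0 ≤ f (Fin.succ 0) := hmono (Fin.zero_le _)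
      exact ⟨h1, h2⟩
  · -- hj
    rintro ⟨g, j⟩ hp
    simp only [Finset.mem_sigma, Finset.mem_filter, Fintype.mem_piFinset, Finset.mem_Icc] at hp
    obtain ⟨⟨hmem, hmono, hlast⟩, hj1, hj2⟩ := hp
    simp only [Finset.mem_filter, Fintype.mem_piFinset]
    refine ⟨?_, ?_, ?_⟩
    · intro i
      refine Fin.cases ?_ ?_ i
      · rw [Fin.cons_zero]
        exact Finset.mem_Icc.2 ⟨hj1, le_trans hj2 (hmem 0).2⟩
      · intro t
        rw [Fin.cons_succ]
        exact Finset.mem_Icc.2 (hmem t)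
    · exact monotone_vecCons.2 ⟨hj2, hmono⟩
    · rw [show Fin.last (s+1) = Fin.succ (Fin.last s) from (Fin.succ_last s).symm, Fin.cons_succ]
      exact hlast
  · -- left_inv
    intro f _
    exact Fin.cons_self_tail f
  · -- right_inv
    rintro ⟨g, j⟩ _
    simp only [Fin.cons_zero]
    have hcs : Fin.cons j g ∘ Fin.succ = g := funext fun i => Fin.cons_succ (α := fun _ => ℕ) j g i
    rw [hcs]
  · -- values
    intro f hf
    simp only [Function.comp_apply]
    rw [Fin.prod_univ_succ]
    ring


lemma main_aux {q : ℂ} {N : ℕ} (hq : ∀ i, 1 ≤ i → i ≤ N → q ^ i ≠ 1) (hq0 : q ≠ 0) :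
    ∀ s : ℕ, ∀ a b : ℕ → ℂ,
    (∀ m, m ≤ N → b m = ∑ k ∈ Finset.Icc 1 m, qb q m k * (-1)^k * q^(Nat.choose k 2) * a k) →
    ∀ n, 1 ≤ n → n ≤ N →
    ∑ k ∈ Finset.Icc 1 n, qb q n k * (-1:ℂ)^k * q^((Nat.choose k 2 : ℤ) - n*k) * Ssum q b n s k
      = ∑ k ∈ Finset.Icc 1 n, q^(s*k) * a k / (qint q k)^(s+1) := by
  intro s
  induction s with
  | zero =>
    intro a b hb n hn1 hn
    have h1 : ∀ k ∈ Finset.Icc 1 n,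
        qb q n k * (-1:ℂ)^k * q^((Nat.choose k 2:ℤ) - n*k) * Ssum q b n 0 k
        = qb q n k * (-1:ℂ)^k * q^((Nat.choose k 2:ℤ) - n*k) * (q^k * b k / qint q k) := by
      intro k hk
      simp only [Finset.mem_Icc] at hk
      rw [Ssum_zero q b hk.1 hk.2]
    rw [Finset.sum_congr rfl h1, base_case hq hq0 hb hn1 hn]
    refine Finset.sum_congr rfl fun k hk => ?_
    simp
  | succ s ih =>
    intro a b hb n hn1 hn
    have h1 : ∀ k ∈ Finset.Icc 1 n,
        qb q n k * (-1:ℂ)^k * q^((Nat.choose k 2:ℤ) - n*k) * Ssum q b n (s+1) k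
        = qb q n k * (-1:ℂ)^k * q^((Nat.choose k 2:ℤ) - n*k) *
            Ssum q (fun m => ∑ j ∈ Finset.Icc 1 m, q ^ j * b j / qint q j) n s k := by
      intro k _
      rw [Ssum_succ]
    have hb' : ∀ m, m ≤ N → (fun m => ∑ j ∈ Finset.Icc 1 m, q ^ j * b j / qint q j) m
        = ∑ k ∈ Finset.Icc 1 m,
            qb q m k * (-1)^k * q^(Nat.choose k 2) * ((fun k => q^k * a k / qint q k) k) := by
      intro m hm
      exact qb_shift hq hq0 hb hm
    rw [Finset.sum_congr rfl h1, ih _ _ hb' n hn1 hn]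
    refine Finset.sum_congr rfl fun k hk => ?_
    simp only [Finset.mem_Icc] at hk
    have hqk : qint q k ≠ 0 := qint_ne_zero hq hq0 hk.1 (by omega)
    rw [show (s+1)*k = s*k + k by ring, pow_add, pow_succ]
    field_simp
    ring

end Helpers

theorem stmt_4 (q : ℂ) (a b : ℕ → ℂ)
    (hb : ∀ m : ℕ, b m = ∑ k ∈ Finset.Icc 1 m,
      qbinom q m k * (-1) ^ k * q ^ (Nat.choose k 2) * a k)
    (n r : ℕ) (hn : 1 ≤ n) (hr : 1 ≤ r) (hq0 : q ≠ 0)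
    (hq : ∀ i, 1 ≤ i → i ≤ n → q ^ i ≠ 1) :
    ∑ k ∈ Finset.Icc 1 n,
        qbinom q n k * (-1) ^ k * q ^ ((Nat.choose k 2 : ℤ) - (n : ℤ) * k) *
          ∑ f ∈ (Fintype.piFinset fun _ : Fin r => Finset.Icc 1 n).filter
            (fun f => Monotone f ∧ f ⟨r - 1, by omega⟩ = k),
            (∏ i : Fin r, q ^ (f i) / qint q (f i)) * b (f ⟨0, by omega⟩)
      = ∑ k ∈ Finset.Icc 1 n, q ^ ((r - 1) * k) * a k / (qint q k) ^ r := by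
  obtain ⟨s, rfl⟩ : ∃ s, r = s + 1 := ⟨r - 1, by omega⟩
  have hb' : ∀ m, m ≤ n → b m = ∑ k ∈ Finset.Icc 1 m,
      qb q m k * (-1)^k * q^(Nat.choose k 2) * a k := by
    intro m hm
    rw [hb m]
    refine Finset.sum_congr rfl fun k hk => ?_
    simp only [Finset.mem_Icc] at hk
    rw [qbinom_eq_qb hq hk.2 hm]
  have key := main_aux hq hq0 s a b hb' n hn le_rfl
  refine Eq.trans (Finset.sum_congr rfl fun k hk => ?_) key
  simp only [Finset.mem_Icc] at hk
  rw [qbinom_eq_qb hq hk.2 le_rfl]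
  rfl
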